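/- The span of the gen-GK vectors v₁,…,v_k equals the Krylov subspace K_k(Aᵀ R⁻¹ A Q, Aᵀ R⁻¹ b) = span{Aᵀ R⁻¹ b, (Aᵀ R⁻¹ A Q)(Aᵀ R⁻¹ b), …, (Aᵀ R⁻¹ A Q)^{k−1}(Aᵀ R⁻¹ b)}. -/
import Mathlib


open Matrix

/-- The span of the gen-GK vectors `v₁, …, v_k` equals the Krylov subspace
`K_k(Aᵀ R⁻¹ A Q, Aᵀ R⁻¹ b)
  = span{Aᵀ R⁻¹ b, (Aᵀ R⁻¹ A Q)(Aᵀ R⁻¹ b), …, (Aᵀ R⁻¹ A Q)^{k−1}(Aᵀ R⁻¹ b)}`.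
(Indexing is 0-based: `v 0 = v₁`.) -/
theorem genGK_krylov_span
    {m n : ℕ} (A : Matrix (Fin m) (Fin n) ℝ)
    (R : Matrix (Fin m) (Fin m) ℝ) (hR : R.PosDef)
    (Q : Matrix (Fin n) (Fin n) ℝ) (hQ : Q.PosDef)
    (b : Fin m → ℝ)
    (u : ℕ → Fin m → ℝ) (v : ℕ → Fin n → ℝ) (α β : ℕ → ℝ)
    (hpos : ∀ i, 0 < α i ∧ 0 < β i)
    (hu0 : β 0 • u 0 = b)
    (hv0 : α 0 • v 0 = (Aᵀ * R⁻¹) *ᵥ u 0)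
    (hu : ∀ i : ℕ, β (i + 1) • u (i + 1) = (A * Q) *ᵥ v i - α i • u i)
    (hv : ∀ i : ℕ, α (i + 1) • v (i + 1) = (Aᵀ * R⁻¹) *ᵥ u (i + 1) - β (i + 1) • v i)
    (k : ℕ) :
    Submodule.span ℝ (Set.range fun i : Fin k => v (i : ℕ)) =
    Submodule.span ℝ (Set.range fun j : Fin k =>
      ((Aᵀ * R⁻¹ * A * Q) ^ (j : ℕ)) *ᵥ ((Aᵀ * R⁻¹) *ᵥ b)) := by
  set ATR := Aᵀ * R⁻¹ with hATRdef
  set M := ATR * A * Q with hMdef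
  set w := ATR *ᵥ b with hwdef
  -- basic rearrangements of the recurrences
  have hAQv : ∀ i, (A * Q) *ᵥ v i = β (i + 1) • u (i + 1) + α i • u i :=
    fun i => (eq_sub_iff_add_eq.mp (hu i)).symm
  have hATRu : ∀ i, ATR *ᵥ u (i + 1) = α (i + 1) • v (i + 1) + β (i + 1) • v i :=
    fun i => (eq_sub_iff_add_eq.mp (hv i)).symm
  have hATRu0 : ATR *ᵥ u 0 = α 0 • v 0 := hv0.symm
  have hv0' : (β 0 * α 0) • v 0 = w := by
    rw [mul_smul, hv0, ← Matrix.mulVec_smul, hu0]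
  have hpow : ∀ (j : ℕ) (x : Fin n → ℝ), M *ᵥ ((M ^ j) *ᵥ x) = (M ^ (j + 1)) *ᵥ x := by
    intro j x
    rw [Matrix.mulVec_mulVec, pow_succ']
  -- three-term recurrence for M *ᵥ v i
  have hMvi : ∀ i, M *ᵥ v i = (β (i + 1) * α (i + 1)) • v (i + 1)
      + (β (i + 1) * β (i + 1)) • v i + α i • (ATR *ᵥ u i) := by
    intro i
    have h1 : M *ᵥ v i = ATR *ᵥ ((A * Q) *ᵥ v i) := by
      rw [Matrix.mulVec_mulVec, hMdef, Matrix.mul_assoc]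
    rw [h1, hAQv i, Matrix.mulVec_add, Matrix.mulVec_smul, Matrix.mulVec_smul, hATRu i]
    module
  -- ATR *ᵥ u i lies in the span of v's
  have hATRuS : ∀ i, ATR *ᵥ u i ∈ Submodule.span ℝ (v '' Set.Iio (i + 1)) := by
    intro i
    match i with
    | 0 =>
      rw [hATRu0]
      exact Submodule.smul_mem _ _ (Submodule.subset_span ⟨0, Set.mem_Iio.mpr (by omega), rfl⟩)
    | i + 1 =>
      rw [hATRu i]
      exact add_mem
        (Submodule.smul_mem _ _ (Submodule.subset_span ⟨i + 1, Set.mem_Iio.mpr (by omega), rfl⟩))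
        (Submodule.smul_mem _ _ (Submodule.subset_span ⟨i, Set.mem_Iio.mpr (by omega), rfl⟩))
  -- monotonicity helpers
  have hSmono : ∀ a c : ℕ, a ≤ c →
      Submodule.span ℝ (v '' Set.Iio a) ≤ Submodule.span ℝ (v '' Set.Iio c) :=
    fun a c h => Submodule.span_mono (Set.image_mono fun x hx => lt_of_lt_of_le hx h)
  have hTmono : ∀ a c : ℕ, a ≤ c →
      Submodule.span ℝ ((fun j => (M ^ j) *ᵥ w) '' Set.Iio a)
        ≤ Submodule.span ℝ ((fun j => (M ^ j) *ᵥ w) '' Set.Iio c) :=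
    fun a c h => Submodule.span_mono (Set.image_mono fun x hx => lt_of_lt_of_le hx h)
  -- applying M maps the Krylov span into the next one
  have hmapT : ∀ (K : ℕ) (x : Fin n → ℝ),
      x ∈ Submodule.span ℝ ((fun j => (M ^ j) *ᵥ w) '' Set.Iio K) →
      M *ᵥ x ∈ Submodule.span ℝ ((fun j => (M ^ j) *ᵥ w) '' Set.Iio (K + 1)) := by
    intro K x hx
    have h2 : M.mulVecLin x ∈
        Submodule.map M.mulVecLin
          (Submodule.span ℝ ((fun j => (M ^ j) *ᵥ w) '' Set.Iio K)) :=
      Submodule.mem_map_of_mem hx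
    rw [Submodule.map_span] at h2
    have h3 : Submodule.span ℝ
        (M.mulVecLin '' ((fun j => (M ^ j) *ᵥ w) '' Set.Iio K)) ≤
        Submodule.span ℝ ((fun j => (M ^ j) *ᵥ w) '' Set.Iio (K + 1)) := by
      rw [Submodule.span_le]
      rintro y ⟨y', ⟨j, hj, rfl⟩, rfl⟩
      simp only [Set.mem_Iio] at hj
      refine Submodule.subset_span ⟨j + 1, Set.mem_Iio.mpr (by omega), ?_⟩
      show (M ^ (j + 1)) *ᵥ w = M.mulVecLin ((M ^ j) *ᵥ w)
      rw [Matrix.mulVecLin_apply, hpow]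
    exact h3 h2
  -- applying M maps the v-span into the next one
  have hmapS : ∀ (K : ℕ) (x : Fin n → ℝ),
      x ∈ Submodule.span ℝ (v '' Set.Iio K) →
      M *ᵥ x ∈ Submodule.span ℝ (v '' Set.Iio (K + 1)) := by
    intro K x hx
    have h2 : M.mulVecLin x ∈
        Submodule.map M.mulVecLin (Submodule.span ℝ (v '' Set.Iio K)) :=
      Submodule.mem_map_of_mem hx
    rw [Submodule.map_span] at h2
    have h3 : Submodule.span ℝ (M.mulVecLin '' (v '' Set.Iio K)) ≤
        Submodule.span ℝ (v '' Set.Iio (K + 1)) := by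
      rw [Submodule.span_le]
      rintro y ⟨y', ⟨j, hj, rfl⟩, rfl⟩
      simp only [Set.mem_Iio] at hj
      show M.mulVecLin (v j) ∈ _
      rw [Matrix.mulVecLin_apply, hMvi j]
      refine add_mem (add_mem ?_ ?_) ?_
      · exact Submodule.smul_mem _ _ (Submodule.subset_span ⟨j + 1, Set.mem_Iio.mpr (by omega), rfl⟩)
      · exact Submodule.smul_mem _ _ (Submodule.subset_span ⟨j, Set.mem_Iio.mpr (by omega), rfl⟩)
      · exact Submodule.smul_mem _ _ (hSmono (j + 1) (K + 1) (by omega) (hATRuS j))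
    exact h3 h2
  -- every Krylov vector lies in the span of v's
  have hwS : ∀ j, (M ^ j) *ᵥ w ∈ Submodule.span ℝ (v '' Set.Iio (j + 1)) := by
    intro j
    induction j with
    | zero =>
      rw [pow_zero, Matrix.one_mulVec, ← hv0']
      exact Submodule.smul_mem _ _ (Submodule.subset_span ⟨0, Set.mem_Iio.mpr (by omega), rfl⟩)
    | succ j ihj =>
      rw [← hpow]
      exact hmapS (j + 1) _ ihj
  -- every v lies in the Krylov span
  have hvT : ∀ i, v i ∈ Submodule.span ℝ ((fun j => (M ^ j) *ᵥ w) '' Set.Iio (i + 1)) := by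
    intro i
    induction i using Nat.strong_induction_on with
    | _ i ih =>
      match i with
      | 0 =>
        have hne : β 0 * α 0 ≠ 0 :=
          ne_of_gt (mul_pos (hpos 0).2 (hpos 0).1)
        have h0 : v 0 = (β 0 * α 0)⁻¹ • ((M ^ 0) *ᵥ w) := by
          rw [pow_zero, Matrix.one_mulVec, ← hv0', inv_smul_smul₀ hne]
        rw [h0]
        exact Submodule.smul_mem _ _ (Submodule.subset_span ⟨0, Set.mem_Iio.mpr (by omega), rfl⟩)
      | i + 1 =>
        have hne : β (i + 1) * α (i + 1) ≠ 0 :=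
          ne_of_gt (mul_pos (hpos (i + 1)).2 (hpos (i + 1)).1)
        have hrec : (β (i + 1) * α (i + 1)) • v (i + 1)
            = M *ᵥ v i - (β (i + 1) * β (i + 1)) • v i - α i • (ATR *ᵥ u i) := by
          rw [hMvi i]; module
        have hsub : Submodule.span ℝ (v '' Set.Iio (i + 1)) ≤
            Submodule.span ℝ ((fun j => (M ^ j) *ᵥ w) '' Set.Iio (i + 2)) := by
          rw [Submodule.span_le]
          rintro x ⟨j, hj, rfl⟩
          simp only [Set.mem_Iio] at hj
          exact hTmono (j + 1) (i + 2) (by omega) (ih j (by omega))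
        have hmem : M *ᵥ v i - (β (i + 1) * β (i + 1)) • v i - α i • (ATR *ᵥ u i)
            ∈ Submodule.span ℝ ((fun j => (M ^ j) *ᵥ w) '' Set.Iio (i + 2)) := by
          refine sub_mem (sub_mem ?_ ?_) ?_
          · exact hmapT (i + 1) _ (ih i (by omega))
          · exact Submodule.smul_mem _ _
              (hTmono (i + 1) (i + 2) (by omega) (ih i (by omega)))
          · exact Submodule.smul_mem _ _ (hsub (hATRuS i))
        have hv1 : v (i + 1) = (β (i + 1) * α (i + 1))⁻¹ •
            (M *ᵥ v i - (β (i + 1) * β (i + 1)) • v i - α i • (ATR *ᵥ u i)) := by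
          rw [← hrec, inv_smul_smul₀ hne]
        rw [hv1]
        exact Submodule.smul_mem _ _ hmem
  -- convert Fin-ranges to images
  have hr1 : (Set.range fun i : Fin k => v (i : ℕ)) = v '' Set.Iio k := by
    ext x
    constructor
    · rintro ⟨i, rfl⟩; exact ⟨(i : ℕ), i.isLt, rfl⟩
    · rintro ⟨j, hj, rfl⟩; exact ⟨⟨j, hj⟩, rfl⟩
  have hr2 : (Set.range fun j : Fin k => (M ^ (j : ℕ)) *ᵥ w)
      = (fun j => (M ^ j) *ᵥ w) '' Set.Iio k := by
    ext x
    constructor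
    · rintro ⟨i, rfl⟩; exact ⟨(i : ℕ), i.isLt, rfl⟩
    · rintro ⟨j, hj, rfl⟩; exact ⟨⟨j, hj⟩, rfl⟩
  rw [hr1, hr2]
  apply le_antisymm
  · rw [Submodule.span_le]
    rintro x ⟨j, hj, rfl⟩
    simp only [Set.mem_Iio] at hj
    exact hTmono (j + 1) k (by omega) (hvT j)
  · rw [Submodule.span_le]
    rintro x ⟨j, hj, rfl⟩
    simp only [Set.mem_Iio] at hj
    exact hSmono (j + 1) k (by omega) (hwS j)
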